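/- Let β = (i_1,…,i_m) be a word in the simple transpositions of S_n and let u ∈ S_n satisfy u ≤ s_{i_1} * s_{i_2} * ⋯ * s_{i_m} in the Bruhat order, where * is the Demazure product. Define u_{(m)} := u and, for c = m, m−1, …, 1, u_{(c−1)} := u_{(c)} s_{i_c} if u_{(c)} s_{i_c} < u_{(c)}, and u_{(c−1)} := u_{(c)} otherwise. Then u_{(0)} = id, and the number of indices c ∈ {1,…,m} with u_{(c)} = u_{(c−1)} equals m − ℓ(u); moreover, the subword of β on the remaining indices (those with u_{(c)} ≠ u_{(c−1)}) is a reduced word for u. -/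

import Mathlib

open Matrix Pointwise
open scoped Classical

noncomputable section

/-- `phi n i A` places the 2×2 matrix `A` into rows and columns `i, i+1`
(0-based) of the identity matrix. -/
def phi (n i : ℕ) (A : Matrix (Fin 2) (Fin 2) ℂ) : Matrix (Fin n) (Fin n) ℂ :=
  Matrix.of fun a b =>
    if (a : ℕ) = i ∧ (b : ℕ) = i then A 0 0
    else if (a : ℕ) = i ∧ (b : ℕ) = i + 1 then A 0 1
    else if (a : ℕ) = i + 1 ∧ (b : ℕ) = i then A 1 0
    else if (a : ℕ) = i + 1 ∧ (b : ℕ) = i + 1 then A 1 1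
    else if a = b then 1 else 0

def sdot (n i : ℕ) : Matrix (Fin n) (Fin n) ℂ := phi n i !![0, -1; 1, 0]
def xmat (n i : ℕ) (t : ℂ) : Matrix (Fin n) (Fin n) ℂ := phi n i !![1, t; 0, 1]
def ymat (n i : ℕ) (t : ℂ) : Matrix (Fin n) (Fin n) ℂ := phi n i !![1, 0; t, 1]
def zmat (n i : ℕ) (t : ℂ) : Matrix (Fin n) (Fin n) ℂ := phi n i !![t, -1; 1, 0]
def zbar (n i : ℕ) (t : ℂ) : Matrix (Fin n) (Fin n) ℂ := phi n i !![t, 1; -1, 0]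
def alphamat (n i : ℕ) (t : ℂ) : Matrix (Fin n) (Fin n) ℂ := phi n i !![t, 0; 0, 1/t]

/-- The simple transposition swapping `i` and `i+1` (0-based). -/
def sperm (n i : ℕ) : Equiv.Perm (Fin n) :=
  if h : i + 1 < n then Equiv.swap ⟨i, Nat.lt_of_succ_lt h⟩ ⟨i + 1, h⟩ else 1

def wordPerm (n : ℕ) (l : List ℕ) : Equiv.Perm (Fin n) := (l.map (sperm n)).prod

def wordMat (n : ℕ) (l : List ℕ) : Matrix (Fin n) (Fin n) ℂ := (l.map (sdot n)).prod

def IsWordFor (n : ℕ) (l : List ℕ) (w : Equiv.Perm (Fin n)) : Prop :=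
  (∀ i ∈ l, i + 1 < n) ∧ wordPerm n l = w

/-- Coxeter length on `S_n`. -/
def plen (n : ℕ) (w : Equiv.Perm (Fin n)) : ℕ :=
  sInf {k | ∃ l : List ℕ, IsWordFor n l w ∧ l.length = k}

def IsReducedWord (n : ℕ) (l : List ℕ) (w : Equiv.Perm (Fin n)) : Prop :=
  IsWordFor n l w ∧ l.length = plen n w

/-- The minor of `M` with row set `A` and column set `B` (of equal sizes). -/
def minorD {n : ℕ} (M : Matrix (Fin n) (Fin n) ℂ) (A B : Finset (Fin n)) : ℂ :=
  if h : A.card = B.card then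
    (M.submatrix (fun k => A.orderEmbOfFin rfl k) (fun k => B.orderEmbOfFin h.symm k)).det
  else 0

/-- `pset n w k = {w(1),…,w(k)}` (1-indexed), i.e. the image under `w`
of the first `k` elements of `Fin n`. -/
def pset (n : ℕ) (w : Equiv.Perm (Fin n)) (k : ℕ) : Finset (Fin n) :=
  (Finset.univ.filter fun j : Fin n => (j : ℕ) < k).image w

/-- Upper unitriangular matrices. -/
def Uplus (n : ℕ) : Set (Matrix (Fin n) (Fin n) ℂ) :=
  {g | (∀ i, g i i = 1) ∧ ∀ i j : Fin n, j < i → g i j = 0}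

/-- The double coset `U₊ M U₊`. -/
def DCoset (n : ℕ) (M : Matrix (Fin n) (Fin n) ℂ) : Set (Matrix (Fin n) (Fin n) ℂ) :=
  {x | ∃ a ∈ Uplus n, ∃ c ∈ Uplus n, x = a * M * c}

/-- The Borel subgroup of upper triangular matrices in SL_n. -/
def Bplus (n : ℕ) : Set (Matrix (Fin n) (Fin n) ℂ) :=
  {g | g.det = 1 ∧ ∀ i j : Fin n, j < i → g i j = 0}

/-- The Bruhat cell `B₊ M B₊`. -/
def BruhatCell (n : ℕ) (M : Matrix (Fin n) (Fin n) ℂ) : Set (Matrix (Fin n) (Fin n) ℂ) :=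
  {x | ∃ a ∈ Bplus n, ∃ c ∈ Bplus n, x = a * M * c}

/-- The Demazure product of a word in simple transpositions. -/
def DemProd (n : ℕ) (l : List ℕ) : Equiv.Perm (Fin n) :=
  l.foldl (fun w i => if plen n w < plen n (w * sperm n i) then w * sperm n i else w) 1

/-- Bruhat order on `S_n`, via the subword characterization: `u ≤ w` iff some
reduced word for `w` contains a subword whose product is `u`. -/
def BruhatLE (n : ℕ) (u w : Equiv.Perm (Fin n)) : Prop :=
  ∃ lw : List ℕ, IsReducedWord n lw w ∧ ∃ l' : List ℕ, l'.Sublist lw ∧ wordPerm n l' = u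

namespace Stmt17Aux
variable {n : ℕ}
theorem sperm_eq {i : ℕ} (h : i + 1 < n) :
    sperm n i = Equiv.swap ⟨i, Nat.lt_of_succ_lt h⟩ ⟨i + 1, h⟩ := dif_pos h
theorem sperm_mul_self {i : ℕ} (h : i + 1 < n) : sperm n i * sperm n i = 1 := by
  rw [sperm_eq h]; exact Equiv.swap_mul_self _ _
theorem sperm_apply_fst {i : ℕ} (h : i + 1 < n) :
    sperm n i ⟨i, Nat.lt_of_succ_lt h⟩ = ⟨i + 1, h⟩ := by
  rw [sperm_eq h]; exact Equiv.swap_apply_left _ _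
theorem sperm_apply_snd {i : ℕ} (h : i + 1 < n) :
    sperm n i ⟨i + 1, h⟩ = ⟨i, Nat.lt_of_succ_lt h⟩ := by
  rw [sperm_eq h]; exact Equiv.swap_apply_right _ _
theorem sperm_apply_other {i : ℕ} (h : i + 1 < n) (a : Fin n)
    (h1 : (a : ℕ) ≠ i) (h2 : (a : ℕ) ≠ i + 1) : sperm n i a = a := by
  rw [sperm_eq h]
  exact Equiv.swap_apply_of_ne_of_ne (by intro hc; exact h1 (by rw [hc])) (by intro hc; exact h2 (by rw [hc]))
def invN (n : ℕ) (w : Equiv.Perm (Fin n)) : ℕ :=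
  (Finset.univ.filter fun p : Fin n × Fin n => p.1 < p.2 ∧ w p.2 < w p.1).card

theorem invN_mul_sperm_of_lt {i : ℕ} (h : i + 1 < n) (w : Equiv.Perm (Fin n))
    (hw : w ⟨i, Nat.lt_of_succ_lt h⟩ < w ⟨i + 1, h⟩) :
    invN n (w * sperm n i) = invN n w + 1 := by
  set I : Fin n := ⟨i, Nat.lt_of_succ_lt h⟩ with hI
  set I1 : Fin n := ⟨i + 1, h⟩ with hI1
  set τ := sperm n i with hτ
  have hinvol : ∀ a, τ (τ a) = a := by
    intro a; rw [← Equiv.Perm.mul_apply, sperm_mul_self h]; rfl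
  have hτI : τ I = I1 := sperm_apply_fst h
  have hτI1 : τ I1 = I := sperm_apply_snd h
  have hII1 : I < I1 := by simp only [hI, hI1, Fin.mk_lt_mk]; omega
  have horder : ∀ a b : Fin n, a < b → ¬(a = I ∧ b = I1) → τ a < τ b := by
    intro a b hab hne
    rcases Nat.lt_trichotomy (a : ℕ) i with ha | ha | ha
    · have hτa : τ a = a := sperm_apply_other h a (by omega) (by omega)
      rcases Nat.lt_trichotomy (b : ℕ) (i + 1) with hb | hb | hb
      · rcases Nat.lt_trichotomy (b : ℕ) i with hb' | hb' | hb'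
        · rw [hτa, sperm_apply_other h b (by omega) (by omega)]; exact hab
        · have : b = I := Fin.ext hb'
          rw [hτa, this, hτI, Fin.lt_def]; simp only [hI1]; omega
        · omega
      · have : b = I1 := Fin.ext hb
        rw [hτa, this, hτI1, Fin.lt_def]; simp only [hI]; omega
      · rw [hτa, sperm_apply_other h b (by omega) (by omega)]; exact hab
    · have haI : a = I := Fin.ext ha
      have hbv : i < (b : ℕ) := by rw [Fin.lt_def] at hab; omega
      rcases Nat.lt_trichotomy (b : ℕ) (i + 1) with hb | hb | hb
      · omega
      · exact absurd ⟨haI, Fin.ext hb⟩ hne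
      · rw [haI, hτI, sperm_apply_other h b (by omega) (by omega), Fin.lt_def]
        simp only [hI1]; omega
    · have hbv : i + 1 < (b : ℕ) := by rw [Fin.lt_def] at hab; omega
      have hτb : τ b = b := sperm_apply_other h b (by omega) (by omega)
      rcases Nat.lt_trichotomy (a : ℕ) (i + 1) with ha' | ha' | ha'
      · omega
      · have haI1 : a = I1 := Fin.ext ha'
        rw [haI1, hτI1, hτb, Fin.lt_def]; simp only [hI]; omega
      · rw [sperm_apply_other h a (by omega) (by omega), hτb]; exact hab
  have hsplit : ∀ v : Equiv.Perm (Fin n),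
      invN n v = (Finset.univ.filter fun p : Fin n × Fin n =>
          (p.1 < p.2 ∧ v p.2 < v p.1) ∧ ¬(p.1 = I ∧ p.2 = I1)).card
        + (if v I1 < v I then 1 else 0) := by
    intro v
    rw [invN, ← Finset.card_filter_add_card_filter_not
      (p := fun p : Fin n × Fin n => ¬(p.1 = I ∧ p.2 = I1))
      (s := Finset.univ.filter fun p : Fin n × Fin n => p.1 < p.2 ∧ v p.2 < v p.1)]
    rw [Finset.filter_filter, Finset.filter_filter]
    congr 1
    have : (Finset.univ.filter fun p : Fin n × Fin n =>
        (p.1 < p.2 ∧ v p.2 < v p.1) ∧ ¬¬(p.1 = I ∧ p.2 = I1)) =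
        if v I1 < v I then {(I, I1)} else ∅ := by
      split_ifs with hv
      · ext p
        simp only [Finset.mem_filter, Finset.mem_univ, true_and, Finset.mem_singleton,
          not_not, Prod.ext_iff]
        constructor
        · rintro ⟨-, h1, h2⟩; exact ⟨h1, h2⟩
        · rintro ⟨h1, h2⟩; rw [h1, h2]; exact ⟨⟨hII1, hv⟩, rfl, rfl⟩
      · ext p
        simp only [Finset.mem_filter, Finset.mem_univ, true_and, Finset.notMem_empty,
          iff_false, not_not, not_and]
        rintro ⟨-, hlt⟩ h1 h2; rw [h1, h2] at hlt; exact hv hlt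
    rw [this]
    split_ifs <;> simp
  have happ : ∀ a, (w * τ) a = w (τ a) := fun a => rfl
  have hbij : (Finset.univ.filter fun p : Fin n × Fin n =>
      (p.1 < p.2 ∧ (w * τ) p.2 < (w * τ) p.1) ∧ ¬(p.1 = I ∧ p.2 = I1)).card =
      (Finset.univ.filter fun p : Fin n × Fin n =>
      (p.1 < p.2 ∧ w p.2 < w p.1) ∧ ¬(p.1 = I ∧ p.2 = I1)).card := by
    apply Finset.card_bij' (fun p _ => (τ p.1, τ p.2)) (fun p _ => (τ p.1, τ p.2))
    · rintro ⟨a, b⟩ ha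
      simp only [Finset.mem_filter, Finset.mem_univ, true_and] at ha ⊢
      obtain ⟨⟨hlt, hval⟩, hne⟩ := ha
      refine ⟨⟨horder a b hlt hne, ?_⟩, ?_⟩
      · rw [happ, happ] at hval; exact hval
      · rintro ⟨e1, e2⟩
        have ha' : a = I1 := by rw [← hinvol a, e1, hτI]
        have hb' : b = I := by rw [← hinvol b, e2, hτI1]
        rw [ha', hb'] at hlt; exact absurd hII1 (lt_asymm hlt)
    · rintro ⟨a, b⟩ ha
      simp only [Finset.mem_filter, Finset.mem_univ, true_and] at ha ⊢
      obtain ⟨⟨hlt, hval⟩, hne⟩ := ha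
      refine ⟨⟨horder a b hlt hne, ?_⟩, ?_⟩
      · rw [happ, happ, hinvol, hinvol]; exact hval
      · rintro ⟨e1, e2⟩
        have ha' : a = I1 := by rw [← hinvol a, e1, hτI]
        have hb' : b = I := by rw [← hinvol b, e2, hτI1]
        rw [ha', hb'] at hlt; exact absurd hII1 (lt_asymm hlt)
    · rintro ⟨a, b⟩ -; simp only [Prod.ext_iff]; exact ⟨hinvol a, hinvol b⟩
    · rintro ⟨a, b⟩ -; simp only [Prod.ext_iff]; exact ⟨hinvol a, hinvol b⟩
  rw [hsplit (w * τ), hsplit w, hbij]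
  have c1 : (w * τ) I1 = w I := by rw [happ, hτI1]
  have c2 : (w * τ) I = w I1 := by rw [happ, hτI]
  rw [c1, c2, if_pos hw, if_neg (lt_asymm hw)]

theorem invN_mul_sperm_of_gt {i : ℕ} (h : i + 1 < n) (w : Equiv.Perm (Fin n))
    (hw : w ⟨i + 1, h⟩ < w ⟨i, Nat.lt_of_succ_lt h⟩) :
    invN n (w * sperm n i) + 1 = invN n w := by
  have key := invN_mul_sperm_of_lt h (w * sperm n i) ?_
  · rw [mul_assoc, sperm_mul_self h, mul_one] at key
    omega
  · have e1 : (w * sperm n i) ⟨i, Nat.lt_of_succ_lt h⟩ = w ⟨i + 1, h⟩ := by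
      rw [Equiv.Perm.mul_apply, sperm_apply_fst h]
    have e2 : (w * sperm n i) ⟨i + 1, h⟩ = w ⟨i, Nat.lt_of_succ_lt h⟩ := by
      rw [Equiv.Perm.mul_apply, sperm_apply_snd h]
    rw [e1, e2]; exact hw

theorem invN_one : invN n 1 = 0 := by
  simp only [invN, Finset.card_eq_zero, Finset.filter_eq_empty_iff]
  rintro p - ⟨h1, h2⟩
  simp only [Equiv.Perm.coe_one, id_eq] at h2
  exact absurd h1 (not_lt.2 h2.le)

theorem perm_eq_one_of_le (w : Equiv.Perm (Fin n)) (hw : ∀ a : Fin n, ((w a : ℕ)) ≤ a) :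
    w = 1 := by
  have hsum : ∑ a : Fin n, ((w a : ℕ)) = ∑ a : Fin n, (a : ℕ) :=
    Equiv.sum_comp w (fun a => (a : ℕ))
  have hall := (Finset.sum_eq_sum_iff_of_le (fun a _ => hw a)).1 hsum
  exact Equiv.ext fun a => Fin.ext (hall a (Finset.mem_univ a))

theorem perm_eq_one_of_ge (w : Equiv.Perm (Fin n)) (hw : ∀ a : Fin n, (a : ℕ) ≤ w a) :
    w = 1 := by
  have h1 : w⁻¹ = 1 := by
    apply perm_eq_one_of_le
    intro a
    have := hw (w⁻¹ a)
    rwa [← Equiv.Perm.mul_apply, mul_inv_cancel, Equiv.Perm.one_apply] at this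
  rw [← inv_inv w, h1, _root_.inv_one]

theorem eq_one_of_no_descent (w : Equiv.Perm (Fin n))
    (hnd : ∀ (i : ℕ) (h : i + 1 < n), w ⟨i, Nat.lt_of_succ_lt h⟩ < w ⟨i + 1, h⟩) :
    w = 1 := by
  apply perm_eq_one_of_ge
  have key : ∀ (k : ℕ) (hk : k < n), k ≤ (w ⟨k, hk⟩ : ℕ) := by
    intro k
    induction k with
    | zero => intro _; exact Nat.zero_le _
    | succ k IH =>
      intro hk
      have h1 : k + 1 < n := hk
      have := hnd k h1
      rw [Fin.lt_def] at this
      have hk' : k < n := Nat.lt_of_succ_lt hk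
      have := IH hk'
      omega
  intro a
  have := key a.1 a.2
  simpa using this

theorem wordPerm_nil : wordPerm n [] = 1 := rfl

theorem wordPerm_append (l1 l2 : List ℕ) :
    wordPerm n (l1 ++ l2) = wordPerm n l1 * wordPerm n l2 := by
  simp [wordPerm, List.map_append, List.prod_append]

theorem wordPerm_concat (l : List ℕ) (i : ℕ) :
    wordPerm n (l ++ [i]) = wordPerm n l * sperm n i := by
  rw [wordPerm_append]; simp [wordPerm]

theorem apply_ne {i : ℕ} (h : i + 1 < n) (w : Equiv.Perm (Fin n)) :
    w ⟨i, Nat.lt_of_succ_lt h⟩ ≠ w ⟨i + 1, h⟩ := by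
  intro hc
  have := w.injective hc
  have := congrArg Fin.val this
  simp at this

theorem invN_le_length : ∀ (l : List ℕ), (∀ i ∈ l, i + 1 < n) →
    invN n (wordPerm n l) ≤ l.length := by
  intro l
  induction l using List.reverseRecOn with
  | nil => intro _; rw [wordPerm_nil, invN_one]; exact Nat.zero_le _
  | append_singleton l i IH =>
    intro hval
    have h : i + 1 < n := hval i (by simp)
    have hvl : ∀ j ∈ l, j + 1 < n := fun j hj => hval j (by simp [hj])
    rw [wordPerm_concat]
    set w₀ := wordPerm n l with hw₀
    rcases lt_trichotomy (w₀ ⟨i, Nat.lt_of_succ_lt h⟩) (w₀ ⟨i + 1, h⟩) with hc | hc | hc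
    · rw [invN_mul_sperm_of_lt h w₀ hc]
      simpa using Nat.add_le_add_right (IH hvl) 1
    · exact absurd hc (apply_ne h w₀)
    · have := invN_mul_sperm_of_gt h w₀ hc
      have := IH hvl
      simp only [List.length_append, List.length_singleton]
      omega

theorem exists_word_invN : ∀ (k : ℕ) (w : Equiv.Perm (Fin n)), invN n w = k →
    ∃ l, IsWordFor n l w ∧ l.length = k := by
  intro k
  induction k using Nat.strong_induction_on with
  | _ k IH =>
    intro w hw
    by_cases hnd : ∀ (i : ℕ) (h : i + 1 < n), w ⟨i, Nat.lt_of_succ_lt h⟩ < w ⟨i + 1, h⟩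
    · have hw1 : w = 1 := eq_one_of_no_descent w hnd
      subst hw1
      rw [invN_one] at hw
      subst hw
      exact ⟨[], ⟨fun i hi => absurd hi List.not_mem_nil, rfl⟩, rfl⟩
    · push_neg at hnd
      obtain ⟨i, h, hge⟩ := hnd
      have hgt : w ⟨i + 1, h⟩ < w ⟨i, Nat.lt_of_succ_lt h⟩ :=
        lt_of_le_of_ne hge ((apply_ne h w).symm)
      have hstep := invN_mul_sperm_of_gt h w hgt
      have hlt : invN n (w * sperm n i) < k := by omega
      obtain ⟨l₀, ⟨hval₀, hprod₀⟩, hlen₀⟩ := IH _ hlt (w * sperm n i) rfl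
      refine ⟨l₀ ++ [i], ⟨?_, ?_⟩, ?_⟩
      · intro j hj
        rcases List.mem_append.1 hj with hj | hj
        · exact hval₀ j hj
        · simp at hj; omega
      · rw [wordPerm_concat, hprod₀, mul_assoc, sperm_mul_self h, mul_one]
      · simp only [List.length_append, List.length_singleton]
        omega

theorem plen_eq_invN (w : Equiv.Perm (Fin n)) : plen n w = invN n w := by
  obtain ⟨l, hl, hlen⟩ := exists_word_invN (invN n w) w rfl
  have hmem : invN n w ∈ {k | ∃ l : List ℕ, IsWordFor n l w ∧ l.length = k} := ⟨l, hl, hlen⟩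
  apply le_antisymm
  · exact Nat.sInf_le hmem
  · apply le_csInf ⟨invN n w, hmem⟩
    rintro b ⟨l', hw', hlen'⟩
    rw [← hlen', ← hw'.2]
    exact invN_le_length l' hw'.1

theorem plen_one : plen n 1 = 0 := by rw [plen_eq_invN, invN_one]

theorem plen_mul_sperm_of_lt {i : ℕ} (h : i + 1 < n) (w : Equiv.Perm (Fin n))
    (hw : w ⟨i, Nat.lt_of_succ_lt h⟩ < w ⟨i + 1, h⟩) :
    plen n (w * sperm n i) = plen n w + 1 := by
  rw [plen_eq_invN, plen_eq_invN]; exact invN_mul_sperm_of_lt h w hw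

theorem plen_mul_sperm_of_gt {i : ℕ} (h : i + 1 < n) (w : Equiv.Perm (Fin n))
    (hw : w ⟨i + 1, h⟩ < w ⟨i, Nat.lt_of_succ_lt h⟩) :
    plen n (w * sperm n i) + 1 = plen n w := by
  rw [plen_eq_invN, plen_eq_invN]; exact invN_mul_sperm_of_gt h w hw

theorem descent_iff {i : ℕ} (h : i + 1 < n) (w : Equiv.Perm (Fin n)) :
    plen n (w * sperm n i) < plen n w ↔ w ⟨i + 1, h⟩ < w ⟨i, Nat.lt_of_succ_lt h⟩ := by
  rcases lt_trichotomy (w ⟨i, Nat.lt_of_succ_lt h⟩) (w ⟨i + 1, h⟩) with hc | hc | hc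
  · have := plen_mul_sperm_of_lt h w hc
    constructor
    · intro h'; omega
    · intro h'; exact absurd hc (lt_asymm h')
  · exact absurd hc (apply_ne h w)
  · have := plen_mul_sperm_of_gt h w hc
    constructor
    · intro _; exact hc
    · intro _; omega

theorem ascent_iff {i : ℕ} (h : i + 1 < n) (w : Equiv.Perm (Fin n)) :
    plen n w < plen n (w * sperm n i) ↔ w ⟨i, Nat.lt_of_succ_lt h⟩ < w ⟨i + 1, h⟩ := by
  rcases lt_trichotomy (w ⟨i, Nat.lt_of_succ_lt h⟩) (w ⟨i + 1, h⟩) with hc | hc | hc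
  · have := plen_mul_sperm_of_lt h w hc
    constructor
    · intro _; exact hc
    · intro _; omega
  · exact absurd hc (apply_ne h w)
  · have := plen_mul_sperm_of_gt h w hc
    constructor
    · intro h'; omega
    · intro h'; exact absurd hc (lt_asymm h')

/-- Rank-matrix count. -/
def Ncnt (n : ℕ) (w : Equiv.Perm (Fin n)) (k j : ℕ) : ℕ :=
  (Finset.univ.filter fun a : Fin n => (a : ℕ) < k ∧ j ≤ ((w a : ℕ))).card

/-- Rank-matrix dominance (Bruhat order). -/
def Dom (n : ℕ) (u w : Equiv.Perm (Fin n)) : Prop := ∀ k j, Ncnt n u k j ≤ Ncnt n w k j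

theorem dom_refl (u : Equiv.Perm (Fin n)) : Dom n u u := fun _ _ => le_refl _

theorem dom_trans {u v w : Equiv.Perm (Fin n)} (h1 : Dom n u v) (h2 : Dom n v w) :
    Dom n u w := fun k j => le_trans (h1 k j) (h2 k j)

theorem Ncnt_succ (w : Equiv.Perm (Fin n)) {k : ℕ} (hk : k < n) (j : ℕ) :
    Ncnt n w (k + 1) j = Ncnt n w k j + (if j ≤ ((w ⟨k, hk⟩ : ℕ)) then 1 else 0) := by
  rw [Ncnt, Ncnt]
  have hsplit : (Finset.univ.filter fun a : Fin n => (a : ℕ) < k + 1 ∧ j ≤ ((w a : ℕ))) =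
      (Finset.univ.filter fun a : Fin n => (a : ℕ) < k ∧ j ≤ ((w a : ℕ))) ∪
      (Finset.univ.filter fun a : Fin n => a = ⟨k, hk⟩ ∧ j ≤ ((w a : ℕ))) := by
    ext a
    simp only [Finset.mem_filter, Finset.mem_univ, true_and, Finset.mem_union]
    constructor
    · rintro ⟨hlt, hj⟩
      by_cases hak : (a : ℕ) = k
      · exact Or.inr ⟨Fin.ext hak, hj⟩
      · exact Or.inl ⟨by omega, hj⟩
    · rintro (⟨hlt, hj⟩ | ⟨rfl, hj⟩)
      · exact ⟨by omega, hj⟩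
      · exact ⟨by simp, hj⟩
  rw [hsplit, Finset.card_union_of_disjoint]
  · congr 1
    split_ifs with hj
    · rw [Finset.card_eq_one]
      refine ⟨⟨k, hk⟩, ?_⟩
      ext a
      simp only [Finset.mem_filter, Finset.mem_univ, true_and, Finset.mem_singleton]
      constructor
      · rintro ⟨rfl, -⟩; rfl
      · rintro rfl; exact ⟨rfl, hj⟩
    · rw [Finset.card_eq_zero, Finset.filter_eq_empty_iff]
      rintro a - ⟨rfl, hj'⟩; exact hj hj'
  · rw [Finset.disjoint_left]
    rintro a ha hb
    simp only [Finset.mem_filter, Finset.mem_univ, true_and] at ha hb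
    obtain ⟨hlt, -⟩ := ha
    obtain ⟨rfl, -⟩ := hb
    simp at hlt
theorem Ncnt_mul_sperm {i : ℕ} (h : i + 1 < n) (w : Equiv.Perm (Fin n)) {k : ℕ} (j : ℕ)
    (hk : k ≠ i + 1) :
    Ncnt n (w * sperm n i) k j = Ncnt n w k j := by
  set τ := sperm n i with hτ
  have hinvol : ∀ a, τ (τ a) = a := by
    intro a; rw [← Equiv.Perm.mul_apply, sperm_mul_self h]; rfl
  have hval : ∀ a : Fin n, ((τ a : ℕ) < k ↔ (a : ℕ) < k) := by
    intro a
    by_cases h1 : (a : ℕ) = i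
    · have ha : a = ⟨i, Nat.lt_of_succ_lt h⟩ := Fin.ext h1
      rw [ha, hτ, sperm_apply_fst h]
      show i + 1 < k ↔ (i : ℕ) < k
      omega
    · by_cases h2 : (a : ℕ) = i + 1
      · have ha : a = ⟨i + 1, h⟩ := Fin.ext h2
        rw [ha, hτ, sperm_apply_snd h]
        show (i : ℕ) < k ↔ i + 1 < k
        omega
      · rw [hτ, sperm_apply_other h a h1 h2]
  rw [Ncnt, Ncnt]
  apply Finset.card_bij' (fun a _ => τ a) (fun a _ => τ a)
  · intro a ha
    simp only [Finset.mem_filter, Finset.mem_univ, true_and] at ha ⊢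
    exact ⟨(hval a).2 ha.1, ha.2⟩
  · intro a ha
    simp only [Finset.mem_filter, Finset.mem_univ, true_and] at ha ⊢
    refine ⟨by rw [hval]; exact ha.1, ?_⟩
    show j ≤ ((w (τ (τ a)) : ℕ))
    rw [hinvol]; exact ha.2
  · intro a _; exact hinvol a
  · intro a _; exact hinvol a

theorem Ncnt_mul_sperm_succ {i : ℕ} (h : i + 1 < n) (w : Equiv.Perm (Fin n)) (j : ℕ) :
    Ncnt n (w * sperm n i) (i + 1) j =
      Ncnt n w i j + (if j ≤ ((w ⟨i + 1, h⟩ : ℕ)) then 1 else 0) := by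
  rw [Ncnt_succ (w * sperm n i) (Nat.lt_of_succ_lt h) j,
    Ncnt_mul_sperm h w j (by omega)]
  congr 2
  rw [Equiv.Perm.mul_apply, sperm_apply_fst h]

theorem dom_of_descent {i : ℕ} (h : i + 1 < n) (w : Equiv.Perm (Fin n))
    (hw : w ⟨i + 1, h⟩ < w ⟨i, Nat.lt_of_succ_lt h⟩) :
    Dom n (w * sperm n i) w := by
  intro k j
  by_cases hk : k = i + 1
  · subst hk
    rw [Ncnt_mul_sperm_succ h w j, Ncnt_succ w (Nat.lt_of_succ_lt h) j]
    have hv : ((w ⟨i + 1, h⟩ : ℕ)) < ((w ⟨i, Nat.lt_of_succ_lt h⟩ : ℕ)) := hw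
    split_ifs <;> omega
  · rw [Ncnt_mul_sperm h w j hk]

theorem dom_mul_of_ascents {i : ℕ} (h : i + 1 < n) {a b : Equiv.Perm (Fin n)}
    (hd : Dom n a b)
    (ha : a ⟨i, Nat.lt_of_succ_lt h⟩ < a ⟨i + 1, h⟩)
    (hb : b ⟨i, Nat.lt_of_succ_lt h⟩ < b ⟨i + 1, h⟩) :
    Dom n (a * sperm n i) (b * sperm n i) := by
  intro k j
  by_cases hk : k = i + 1
  · subst hk
    rw [Ncnt_mul_sperm_succ h a j, Ncnt_mul_sperm_succ h b j]
    have h1 := hd i j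
    have h2 := hd (i + 1) j
    have h3 := hd (i + 2) j
    rw [Ncnt_succ a (Nat.lt_of_succ_lt h) j, Ncnt_succ b (Nat.lt_of_succ_lt h) j] at h2
    rw [Ncnt_succ a h j, Ncnt_succ b h j,
      Ncnt_succ a (Nat.lt_of_succ_lt h) j, Ncnt_succ b (Nat.lt_of_succ_lt h) j] at h3
    have hva : ((a ⟨i, Nat.lt_of_succ_lt h⟩ : ℕ)) < ((a ⟨i + 1, h⟩ : ℕ)) := ha
    have hvb : ((b ⟨i, Nat.lt_of_succ_lt h⟩ : ℕ)) < ((b ⟨i + 1, h⟩ : ℕ)) := hb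
    split_ifs at h2 h3 ⊢ <;> omega
  · rw [Ncnt_mul_sperm h a j hk, Ncnt_mul_sperm h b j hk]
    exact hd k j

theorem dom_lift_descent {i : ℕ} (h : i + 1 < n) {u w : Equiv.Perm (Fin n)}
    (hd : Dom n u (w * sperm n i))
    (hu : u ⟨i + 1, h⟩ < u ⟨i, Nat.lt_of_succ_lt h⟩)
    (hw : w ⟨i, Nat.lt_of_succ_lt h⟩ < w ⟨i + 1, h⟩) :
    Dom n (u * sperm n i) w := by
  intro k j
  by_cases hk : k = i + 1
  · subst hk
    rw [Ncnt_mul_sperm_succ h u j, Ncnt_succ w (Nat.lt_of_succ_lt h) j]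
    have h1 := hd i j
    have h2 := hd (i + 1) j
    have h3 := hd (i + 2) j
    rw [Ncnt_mul_sperm h w j (by omega)] at h1
    rw [Ncnt_succ u (Nat.lt_of_succ_lt h) j, Ncnt_mul_sperm_succ h w j] at h2
    rw [Ncnt_mul_sperm h w j (by omega),
      Ncnt_succ u h j, Ncnt_succ w h j,
      Ncnt_succ u (Nat.lt_of_succ_lt h) j, Ncnt_succ w (Nat.lt_of_succ_lt h) j] at h3
    have hvu : ((u ⟨i + 1, h⟩ : ℕ)) < ((u ⟨i, Nat.lt_of_succ_lt h⟩ : ℕ)) := hu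
    have hvw : ((w ⟨i, Nat.lt_of_succ_lt h⟩ : ℕ)) < ((w ⟨i + 1, h⟩ : ℕ)) := hw
    split_ifs at h2 h3 ⊢ <;> omega
  · rw [Ncnt_mul_sperm h u j hk]
    have := hd k j
    rwa [Ncnt_mul_sperm h w j hk] at this

theorem dom_drop_ascent {i : ℕ} (h : i + 1 < n) {u w : Equiv.Perm (Fin n)}
    (hd : Dom n u (w * sperm n i))
    (hu : u ⟨i, Nat.lt_of_succ_lt h⟩ < u ⟨i + 1, h⟩)
    (hw : w ⟨i, Nat.lt_of_succ_lt h⟩ < w ⟨i + 1, h⟩) :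
    Dom n u w := by
  intro k j
  by_cases hk : k = i + 1
  · subst hk
    rw [Ncnt_succ u (Nat.lt_of_succ_lt h) j, Ncnt_succ w (Nat.lt_of_succ_lt h) j]
    have h1 := hd i j
    have h2 := hd (i + 1) j
    have h3 := hd (i + 2) j
    rw [Ncnt_mul_sperm h w j (by omega)] at h1
    rw [Ncnt_succ u (Nat.lt_of_succ_lt h) j, Ncnt_mul_sperm_succ h w j] at h2
    rw [Ncnt_mul_sperm h w j (by omega),
      Ncnt_succ u h j, Ncnt_succ w h j,
      Ncnt_succ u (Nat.lt_of_succ_lt h) j, Ncnt_succ w (Nat.lt_of_succ_lt h) j] at h3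
    have hvu : ((u ⟨i, Nat.lt_of_succ_lt h⟩ : ℕ)) < ((u ⟨i + 1, h⟩ : ℕ)) := hu
    have hvw : ((w ⟨i, Nat.lt_of_succ_lt h⟩ : ℕ)) < ((w ⟨i + 1, h⟩ : ℕ)) := hw
    split_ifs at h2 h3 ⊢ <;> omega
  · have := hd k j
    rwa [Ncnt_mul_sperm h w j hk] at this

theorem eq_one_of_dom_one {u : Equiv.Perm (Fin n)} (hd : Dom n u 1) : u = 1 := by
  apply perm_eq_one_of_le
  intro a
  by_contra hc
  push_neg at hc
  have h1 : 0 < Ncnt n u ((a : ℕ) + 1) ((a : ℕ) + 1) := by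
    rw [Ncnt, Finset.card_pos]
    exact ⟨a, by simp only [Finset.mem_filter, Finset.mem_univ, true_and]; omega⟩
  have h2 : Ncnt n 1 ((a : ℕ) + 1) ((a : ℕ) + 1) = 0 := by
    rw [Ncnt, Finset.card_eq_zero, Finset.filter_eq_empty_iff]
    rintro b - ⟨hlt, hj⟩
    simp only [Equiv.Perm.coe_one, id_eq] at hj
    omega
  have := hd ((a : ℕ) + 1) ((a : ℕ) + 1)
  omega

theorem dom_of_sublist_reduced : ∀ (lw : List ℕ) (w : Equiv.Perm (Fin n)),
    IsReducedWord n lw w → ∀ l' : List ℕ, l'.Sublist lw → Dom n (wordPerm n l') w := by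
  intro lw
  induction lw using List.reverseRecOn with
  | nil =>
    intro w hred l' hsub
    have hl' : l' = [] := List.sublist_nil.mp hsub
    subst hl'
    rw [← hred.1.2]
    exact dom_refl _
  | append_singleton l i IH =>
    intro w hred l' hsub
    obtain ⟨⟨hval, hprod⟩, hlen⟩ := hred
    have h : i + 1 < n := hval i (by simp)
    have hvl : ∀ j ∈ l, j + 1 < n := fun j hj => hval j (by simp [hj])
    set w₀ := wordPerm n l with hw₀
    have hw : w = w₀ * sperm n i := by rw [← hprod, wordPerm_concat]
    have hlw₀ : plen n w₀ ≤ l.length := by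
      rw [plen_eq_invN]; exact invN_le_length l hvl
    have hlenw : plen n w = l.length + 1 := by
      rw [← hlen]; simp
    have hasc : w₀ ⟨i, Nat.lt_of_succ_lt h⟩ < w₀ ⟨i + 1, h⟩ := by
      rcases lt_trichotomy (w₀ ⟨i, Nat.lt_of_succ_lt h⟩) (w₀ ⟨i + 1, h⟩) with hc | hc | hc
      · exact hc
      · exact absurd hc (apply_ne h w₀)
      · have := plen_mul_sperm_of_gt h w₀ hc
        rw [← hw] at this
        omega
    have hred₀ : IsReducedWord n l w₀ := by
      refine ⟨⟨hvl, rfl⟩, ?_⟩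
      have := plen_mul_sperm_of_lt h w₀ hasc
      rw [← hw] at this
      omega
    have hdom₀w : Dom n w₀ w := by
      rw [hw]
      have hdesc : (w₀ * sperm n i) ⟨i + 1, h⟩ <
          (w₀ * sperm n i) ⟨i, Nat.lt_of_succ_lt h⟩ := by
        rw [Equiv.Perm.mul_apply, Equiv.Perm.mul_apply, sperm_apply_fst h, sperm_apply_snd h]
        exact hasc
      have := dom_of_descent h (w₀ * sperm n i) hdesc
      rwa [mul_assoc, sperm_mul_self h, mul_one] at this
    rcases List.sublist_append_iff.mp hsub with ⟨l₁, l₂, rfl, hs₁, hs₂⟩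
    have hd₁ : Dom n (wordPerm n l₁) w₀ := IH w₀ hred₀ l₁ hs₁
    rcases List.sublist_singleton.mp hs₂ with rfl | rfl
    · rw [List.append_nil]
      exact dom_trans hd₁ hdom₀w
    · rw [wordPerm_concat]
      set u₁ := wordPerm n l₁ with hu₁
      rcases lt_trichotomy (u₁ ⟨i, Nat.lt_of_succ_lt h⟩) (u₁ ⟨i + 1, h⟩) with hc | hc | hc
      · rw [hw]
        exact dom_mul_of_ascents h hd₁ hc hasc
      · exact absurd hc (apply_ne h u₁)
      · exact dom_trans (dom_of_descent h u₁ hc) (dom_trans hd₁ hdom₀w)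

theorem dom_of_bruhatLE {u w : Equiv.Perm (Fin n)} (h : BruhatLE n u w) : Dom n u w := by
  obtain ⟨lw, hred, l', hsub, hprod⟩ := h
  rw [← hprod]
  exact dom_of_sublist_reduced lw w hred l' hsub

theorem demProd_nil : DemProd n [] = 1 := rfl

theorem demProd_concat (l : List ℕ) (i : ℕ) :
    DemProd n (l ++ [i]) =
      if plen n (DemProd n l) < plen n (DemProd n l * sperm n i)
      then DemProd n l * sperm n i else DemProd n l := by
  rw [DemProd, DemProd, List.foldl_append]
  rfl

end Stmt17Aux

open Stmt17Aux in
/-- the positive distinguished subexpression. The word is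
`β = (i_1,…,i_m)` with `i_c = l.getD (c-1) 0` (1-indexed `c`); `useq c` is
`u_{(c)}`. The condition `u_{(c)} s_{i_c} < u_{(c)}` is length decrease. -/
theorem stmt17 (n m : ℕ) (l : List ℕ) (hlenl : l.length = m)
    (hvalid : ∀ i ∈ l, i + 1 < n)
    (u : Equiv.Perm (Fin n)) (hle : BruhatLE n u (DemProd n l))
    (useq : ℕ → Equiv.Perm (Fin n)) (htop : useq m = u)
    (hrec : ∀ c : ℕ, 1 ≤ c → c ≤ m →
      useq (c - 1) =
        if plen n (useq c * sperm n (l.getD (c - 1) 0)) < plen n (useq c)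
        then useq c * sperm n (l.getD (c - 1) 0) else useq c) :
    useq 0 = 1 ∧
    ((Finset.Icc 1 m).filter fun c => useq c = useq (c - 1)).card = m - plen n u ∧
    IsReducedWord n
      (((List.range m).filter fun c0 => decide (useq (c0 + 1) ≠ useq c0)).map
        fun c0 => l.getD c0 0) u := by
  classical
  have hvc : ∀ c0, c0 < m → l.getD c0 0 + 1 < n := by
    intro c0 hc0
    have hc0' : c0 < l.length := by omega
    rw [List.getD_eq_getElem l 0 hc0']
    exact hvalid _ (List.getElem_mem hc0')
  have htake : ∀ c, 1 ≤ c → c ≤ m → l.take c = l.take (c - 1) ++ [l.getD (c - 1) 0] := by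
    intro c h1 h2
    have hlt : c - 1 < l.length := by omega
    rw [List.getD_eq_getElem l 0 hlt]
    have hth := List.take_concat_get hlt
    rw [List.concat_eq_append] at hth
    have hcc : c - 1 + 1 = c := by omega
    rw [hcc] at hth
    exact hth.symm
  have hgreedy : ∀ t, t ≤ m → Dom n (useq (m - t)) (DemProd n (l.take (m - t))) := by
    intro t
    induction t with
    | zero =>
      intro _
      have htk : l.take (m - 0) = l := by
        rw [Nat.sub_zero, ← hlenl]; exact List.take_length
      rw [htk, Nat.sub_zero, htop]
      exact dom_of_bruhatLE hle
    | succ t IHt =>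
      intro ht
      have hc1 : 1 ≤ m - t := by omega
      set c := m - t with hcdef
      have hmt1 : m - (t + 1) = c - 1 := by omega
      rw [hmt1]
      have hIH := IHt (by omega)
      set i := l.getD (c - 1) 0 with hidef
      have h : i + 1 < n := hvc (c - 1) (by omega)
      rw [htake c hc1 (by omega), demProd_concat] at hIH
      set w₀ := DemProd n (l.take (c - 1)) with hw₀
      have hr := hrec c hc1 (by omega)
      rcases lt_trichotomy (w₀ ⟨i, Nat.lt_of_succ_lt h⟩) (w₀ ⟨i + 1, h⟩) with hcw | hcw | hcw
      · rw [if_pos ((ascent_iff h w₀).mpr hcw)] at hIH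
        rcases lt_trichotomy (useq c ⟨i, Nat.lt_of_succ_lt h⟩) (useq c ⟨i + 1, h⟩)
          with hcu | hcu | hcu
        · have hnot : ¬ plen n (useq c * sperm n i) < plen n (useq c) := by
            rw [descent_iff h (useq c)]; exact lt_asymm hcu
          rw [if_neg hnot] at hr
          rw [hr]
          exact dom_drop_ascent h hIH hcu hcw
        · exact absurd hcu (apply_ne h _)
        · have hyes : plen n (useq c * sperm n i) < plen n (useq c) :=
            (descent_iff h (useq c)).mpr hcu
          rw [if_pos hyes] at hr
          rw [hr]
          exact dom_lift_descent h hIH hcu hcw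
      · exact absurd hcw (apply_ne h _)
      · have hnot : ¬ plen n w₀ < plen n (w₀ * sperm n i) := by
          rw [ascent_iff h w₀]; exact lt_asymm hcw
        rw [if_neg hnot] at hIH
        rcases lt_trichotomy (useq c ⟨i, Nat.lt_of_succ_lt h⟩) (useq c ⟨i + 1, h⟩)
          with hcu | hcu | hcu
        · have hnotu : ¬ plen n (useq c * sperm n i) < plen n (useq c) := by
            rw [descent_iff h (useq c)]; exact lt_asymm hcu
          rw [if_neg hnotu] at hr
          rw [hr]
          exact hIH
        · exact absurd hcu (apply_ne h _)
        · have hyes := (descent_iff h (useq c)).mpr hcu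
          rw [if_pos hyes] at hr
          rw [hr]
          exact dom_trans (dom_of_descent h (useq c) hcu) hIH
  have husq0 : useq 0 = 1 := by
    have h0 := hgreedy m le_rfl
    rw [Nat.sub_self, List.take_zero, demProd_nil] at h0
    exact eq_one_of_dom_one h0
  have hinv : ∀ c, c ≤ m →
      wordPerm n (((List.range c).filter fun c0 => decide (useq (c0 + 1) ≠ useq c0)).map
        fun c0 => l.getD c0 0) = useq c ∧
      (((List.range c).filter fun c0 => decide (useq (c0 + 1) ≠ useq c0)).map
        fun c0 => l.getD c0 0).length
        + ((Finset.Icc 1 c).filter fun c' => useq c' = useq (c' - 1)).card = c ∧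
      (((List.range c).filter fun c0 => decide (useq (c0 + 1) ≠ useq c0)).map
        fun c0 => l.getD c0 0).length = plen n (useq c) := by
    intro c
    induction c with
    | zero =>
      intro _
      refine ⟨?_, ?_, ?_⟩
      · simp only [List.range_zero, List.filter_nil, List.map_nil]
        rw [husq0]; rfl
      · simp
      · simp only [List.range_zero, List.filter_nil, List.map_nil, List.length_nil]
        rw [husq0, plen_one]
    | succ c IHc =>
      intro hc
      obtain ⟨ih1, ih2, ih3⟩ := IHc (by omega)
      have hr := hrec (c + 1) (by omega) (by omega)
      simp only [Nat.add_sub_cancel] at hr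
      set i := l.getD c 0 with hidef
      have h : i + 1 < n := hvc c (by omega)
      have hicc : Finset.Icc 1 (c + 1) = insert (c + 1) (Finset.Icc 1 c) :=
        (Finset.insert_Icc_right_eq_Icc_add_one (by omega)).symm
      rw [List.range_succ, List.filter_append, List.map_append]
      by_cases hne : useq (c + 1) = useq c
      · have hfilter : (List.filter (fun c0 => decide (useq (c0 + 1) ≠ useq c0)) [c]) = [] := by
          simp only [List.filter_singleton]
          rw [decide_eq_false (by simp [hne])]
          rfl
        rw [hfilter]
        simp only [List.map_nil, List.append_nil]
        refine ⟨by rw [ih1, hne], ?_, by rw [ih3, hne]⟩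
        rw [hicc, Finset.filter_insert, if_pos (by simpa using hne),
          Finset.card_insert_of_notMem]
        · omega
        · intro hmem
          have := (Finset.mem_filter.1 hmem).1
          rw [Finset.mem_Icc] at this
          omega
      · split_ifs at hr with hcond
        · -- descent step
          have husq1 : useq (c + 1) = useq c * sperm n i := by
            rw [hr, mul_assoc, sperm_mul_self h, mul_one]
          rw [← hr] at hcond
          have hplen : plen n (useq (c + 1)) = plen n (useq c) + 1 := by
            rcases lt_trichotomy (useq c ⟨i, Nat.lt_of_succ_lt h⟩) (useq c ⟨i + 1, h⟩)
              with hcu | hcu | hcu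
            · rw [husq1]; exact plen_mul_sperm_of_lt h _ hcu
            · exact absurd hcu (apply_ne h _)
            · have := plen_mul_sperm_of_gt h (useq c) hcu
              rw [← husq1] at this
              omega
          have hfilter : (List.filter (fun c0 => decide (useq (c0 + 1) ≠ useq c0)) [c])
              = [c] := by
            simp only [List.filter_singleton]
            rw [decide_eq_true (by simp [hne])]
            rfl
          rw [hfilter]
          have hmapc : (List.map (fun c0 => l.getD c0 0) [c]) = [i] := by
            simp [hidef]
          rw [hmapc]
          refine ⟨?_, ?_, ?_⟩
          · rw [wordPerm_concat, ih1]
            exact husq1.symm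
          · rw [List.length_append, List.length_singleton, hicc, Finset.filter_insert,
              if_neg (by simpa using hne), ]
            omega
          · rw [List.length_append, List.length_singleton]
            omega
        · exact absurd hr.symm hne
  obtain ⟨hwp, hcnt, hlen2⟩ := hinv m le_rfl
  refine ⟨husq0, ?_, ?_⟩
  · rw [← htop]
    omega
  · refine ⟨⟨?_, ?_⟩, ?_⟩
    · intro j hj
      simp only [List.mem_map, List.mem_filter, List.mem_range] at hj
      obtain ⟨c0, ⟨hc0, -⟩, rfl⟩ := hj
      exact hvc c0 hc0
    · rw [htop] at hwp
      exact hwp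
    · rw [htop] at hlen2
      exact hlen2
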